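/- Let 0 < a < 1, l ∈ ℝ, ε > 0, and let ψ : (l, l+ε] → ℝ be twice continuously differentiable such that the limit lim_{x → l⁺} ψ''(x)·(x−l)^{1+a} exists and is nonzero. Then for every b with 1−a < b ≤ 1, the function ψ is not b-Hölder on (l, l+ε]. -/

import Mathlib

open Set Filter

lemma aux_pos (a l ε : ℝ) (ha0 : 0 < a) (ha1 : a < 1) (hε : 0 < ε)
    (ψ ψ' ψ'' : ℝ → ℝ)
    (hd1 : ∀ x ∈ Set.Ioc l (l + ε), HasDerivWithinAt ψ (ψ' x) (Set.Ioc l (l + ε)) x)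
    (hd2 : ∀ x ∈ Set.Ioc l (l + ε), HasDerivWithinAt ψ' (ψ'' x) (Set.Ioc l (l + ε)) x)
    (L : ℝ) (hL : 0 < L)
    (hlim : Filter.Tendsto (fun x => ψ'' x * (x - l) ^ (1 + a))
      (nhdsWithin l (Set.Ioi l)) (nhds L))
    (b : ℝ) (hb1 : 1 - a < b) (hb2 : b ≤ 1)
    (M : ℝ) (hM : 0 ≤ M)
    (hhol : ∀ x ∈ Set.Ioc l (l + ε), ∀ y ∈ Set.Ioc l (l + ε),
      |ψ x - ψ y| ≤ M * |x - y| ^ b) : False := by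
  have ha1' : (0:ℝ) < 1 - a := by linarith
  -- get a right-neighborhood where ψ'' x * (x-l)^(1+a) > L/2
  have hev : ∀ᶠ x in nhdsWithin l (Set.Ioi l), L / 2 < ψ'' x * (x - l) ^ (1 + a) :=
    hlim.eventually (eventually_gt_nhds (half_lt_self hL))
  obtain ⟨u, hu, hsub⟩ := mem_nhdsGT_iff_exists_Ioc_subset.mp hev
  set d : ℝ := min u (l + ε) with hd_def
  have hld : l < d := lt_min hu (by linarith)
  have hdε : d ≤ l + ε := min_le_right _ _
  have hIsub : Set.Ioc l d ⊆ Set.Ioc l (l + ε) := Set.Ioc_subset_Ioc_right hdε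
  have hIsub' : Set.Ioc l d ⊆ Set.Ioc l u := Set.Ioc_subset_Ioc_right (min_le_left _ _)
  set c : ℝ := L / (2 * a) with hc_def
  have hc : 0 < c := by positivity
  set k : ℝ := c / (1 - a) with hk_def
  have hk : 0 < k := div_pos hc ha1'
  -- HasDerivAt versions on the open interval
  have hmemIoo : ∀ x ∈ Set.Ioo l d, Set.Ioc l (l + ε) ∈ nhds x := by
    intro x hx
    exact mem_nhds_iff.mpr ⟨Set.Ioo l (l + ε), Set.Ioo_subset_Ioc_self, isOpen_Ioo,
      ⟨hx.1, lt_of_lt_of_le hx.2 hdε⟩⟩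
  have hmemIoc : ∀ x ∈ Set.Ioo l d, x ∈ Set.Ioc l (l + ε) := fun x hx =>
    ⟨hx.1, le_of_lt (lt_of_lt_of_le hx.2 hdε)⟩
  have hDψ : ∀ x ∈ Set.Ioo l d, HasDerivAt ψ (ψ' x) x := fun x hx =>
    (hd1 x (hmemIoc x hx)).hasDerivAt (hmemIoo x hx)
  have hDψ' : ∀ x ∈ Set.Ioo l d, HasDerivAt ψ' (ψ'' x) x := fun x hx =>
    (hd2 x (hmemIoc x hx)).hasDerivAt (hmemIoo x hx)
  have hDr : ∀ p : ℝ, ∀ x ∈ Set.Ioo l d,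
      HasDerivAt (fun y => (y - l) ^ p) (p * (x - l) ^ (p - 1)) x := by
    intro p x hx
    have h0 : x - l ≠ 0 := sub_ne_zero.mpr (ne_of_gt hx.1)
    have := ((hasDerivAt_id x).sub_const l).rpow_const (p := p) (Or.inl h0)
    simpa using this
  -- lower bound on ψ'' on Ioc l d
  have hψ'' : ∀ x ∈ Set.Ioc l d, c * a * (x - l) ^ (-a - 1) ≤ ψ'' x := by
    intro x hx
    have hxl : 0 < x - l := sub_pos.mpr hx.1
    have h1 : L / 2 < ψ'' x * (x - l) ^ (1 + a) := hsub (hIsub' hx)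
    have hpow : (0:ℝ) < (x - l) ^ (1 + a) := Real.rpow_pos_of_pos hxl _
    have h2 : L / 2 / (x - l) ^ (1 + a) < ψ'' x := (div_lt_iff₀ hpow).mpr h1
    have hca : c * a = L / 2 := by rw [hc_def]; field_simp
    have hneg : (x - l) ^ (-a - 1) = ((x - l) ^ (1 + a))⁻¹ := by
      rw [← Real.rpow_neg hxl.le]; ring_nf
    rw [hca, hneg, ← div_eq_mul_inv]
    exact h2.le
  -- g is monotone on Ioc l d
  set g : ℝ → ℝ := fun y => ψ' y + c * (y - l) ^ (-a) with hg_def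
  have hgmono : MonotoneOn g (Set.Ioc l d) := by
    apply monotoneOn_of_hasDerivWithinAt_nonneg (convex_Ioc l d)
      (f' := fun x => ψ'' x + c * (-a * (x - l) ^ (-a - 1)))
    · -- continuity
      apply ContinuousOn.add
      · exact fun x hx => (hd2 x (hIsub hx)).differentiableWithinAt.continuousWithinAt.mono
          hIsub
      · apply ContinuousOn.mul continuousOn_const
        apply ContinuousOn.rpow_const ((continuous_id.sub continuous_const).continuousOn)
        intro x hx
        exact Or.inl (sub_ne_zero.mpr (ne_of_gt hx.1))
    · intro x hx
      rw [interior_Ioc] at hx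
      exact ((hDψ' x hx).add (((hDr (-a) x hx)).const_mul c)).hasDerivWithinAt
    · intro x hx
      rw [interior_Ioc] at hx
      have := hψ'' x (Set.Ioo_subset_Ioc_self hx)
      nlinarith [this]
  have hdmem : d ∈ Set.Ioc l d := ⟨hld, le_refl d⟩
  set C : ℝ := g d with hC_def
  have hψ'le : ∀ x ∈ Set.Ioc l d, ψ' x ≤ C - c * (x - l) ^ (-a) := by
    intro x hx
    have := hgmono hx hdmem hx.2
    rw [hg_def] at this
    simp only at this
    have hCval : C = ψ' d + c * (d - l) ^ (-a) := rfl
    linarith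
  -- h is antitone on Ioc l d
  set h : ℝ → ℝ := fun y => ψ y - C * y + k * (y - l) ^ (1 - a) with hh_def
  have hhanti : AntitoneOn h (Set.Ioc l d) := by
    apply antitoneOn_of_hasDerivWithinAt_nonpos (convex_Ioc l d)
      (f' := fun x => ψ' x - C + k * ((1 - a) * (x - l) ^ (1 - a - 1)))
    · apply ContinuousOn.add
      · apply ContinuousOn.sub
        · exact fun x hx => (hd1 x (hIsub hx)).differentiableWithinAt.continuousWithinAt.mono
            hIsub
        · exact (continuous_const.mul continuous_id).continuousOn
      · apply ContinuousOn.mul continuousOn_const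
        apply ContinuousOn.rpow_const ((continuous_id.sub continuous_const).continuousOn)
        intro x hx
        exact Or.inl (sub_ne_zero.mpr (ne_of_gt hx.1))
    · intro x hx
      rw [interior_Ioc] at hx
      have : HasDerivAt (fun y => ψ y - C * y) (ψ' x - C) x := by
        have h := (hDψ x hx).sub ((hasDerivAt_id' x).const_mul C); rw [mul_one] at h; exact h
      exact (this.add ((hDr (1 - a) x hx).const_mul k)).hasDerivWithinAt
    · intro x hx
      rw [interior_Ioc] at hx
      have h1 := hψ'le x (Set.Ioo_subset_Ioc_self hx)
      have he : (1:ℝ) - a - 1 = -a := by ring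
      rw [he]
      have hk1 : k * ((1 - a) * (x - l) ^ (-a)) = c * (x - l) ^ (-a) := by
        rw [hk_def]; field_simp
      rw [hk1]
      linarith
  -- key inequality for all small t
  have hkey : ∀ t : ℝ, t ∈ Set.Ioc 0 (d - l) → k / 2 * t ^ (1 - a) ≤ M * t ^ b + |C| * t := by
    intro t ht
    set q : ℝ := (1/2 : ℝ) ^ (1 / (1 - a)) with hq_def
    have hq0 : 0 < q := Real.rpow_pos_of_pos (by norm_num) _
    have hq1 : q < 1 := Real.rpow_lt_one (by norm_num) (by norm_num) (by positivity)
    set s : ℝ := t * q with hs_def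
    have hs0 : 0 < s := mul_pos ht.1 hq0
    have hst : s < t := by
      calc s = t * q := rfl
        _ < t * 1 := by exact mul_lt_mul_of_pos_left hq1 ht.1
        _ = t := mul_one t
    have hspow : s ^ (1 - a) = t ^ (1 - a) / 2 := by
      rw [hs_def, Real.mul_rpow ht.1.le hq0.le, hq_def,
        ← Real.rpow_mul (by norm_num : (0:ℝ) ≤ 1/2)]
      have h11 : 1 / (1 - a) * (1 - a) = 1 := by field_simp
      rw [h11, Real.rpow_one]
      ring
    set y : ℝ := l + t with hy_def
    set x : ℝ := l + s with hx_def
    have hymem : y ∈ Set.Ioc l d := ⟨by rw [hy_def]; linarith [ht.1], by rw [hy_def]; linarith [ht.2]⟩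
    have hxmem : x ∈ Set.Ioc l d := ⟨by rw [hx_def]; linarith, by rw [hx_def]; nlinarith [ht.2]⟩
    have hxy : x ≤ y := by rw [hx_def, hy_def]; linarith
    -- antitone gives
    have hH := hhanti hxmem hymem hxy
    rw [hh_def] at hH
    simp only at hH
    have hyl : y - l = t := by rw [hy_def]; ring
    have hxl : x - l = s := by rw [hx_def]; ring
    rw [hyl, hxl] at hH
    -- ψ x - ψ y ≥ C*(x - y) + k*(t^(1-a) - s^(1-a))
    have hlow : C * (x - y) + k * (t ^ (1 - a) - s ^ (1 - a)) ≤ ψ x - ψ y := by linarith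
    -- Hölder upper bound
    have hHol := hhol x (hIsub hxmem) y (hIsub hymem)
    have hxy' : |x - y| = t - s := by
      rw [abs_sub_comm, abs_of_pos (by linarith : (0:ℝ) < y - x)]
      rw [hx_def, hy_def]; ring
    have hb0 : 0 < b := by linarith
    have hup : ψ x - ψ y ≤ M * t ^ b := by
      calc ψ x - ψ y ≤ |ψ x - ψ y| := le_abs_self _
        _ ≤ M * |x - y| ^ b := hHol
        _ ≤ M * t ^ b := by
            apply mul_le_mul_of_nonneg_left _ hM
            rw [hxy']
            exact Real.rpow_le_rpow (by linarith) (by linarith) hb0.le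
    have hCb : -( |C| * t) ≤ C * (x - y) := by
      have : |C * (x - y)| ≤ |C| * t := by
        rw [abs_mul]
        apply mul_le_mul_of_nonneg_left _ (abs_nonneg C)
        rw [abs_sub_comm, abs_of_pos (by linarith : (0:ℝ) < y - x)]
        rw [hx_def, hy_def]; linarith
      linarith [neg_abs_le (C * (x - y))]
    have : k * (t ^ (1 - a) - s ^ (1 - a)) = k / 2 * t ^ (1 - a) := by
      rw [hspow]; ring
    linarith
  -- contradiction as t → 0⁺
  have htend : Filter.Tendsto (fun t : ℝ => M * t ^ (b - (1 - a)) + |C| * t ^ a)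
      (nhdsWithin 0 (Set.Ioi 0)) (nhds 0) := by
    have h1 : Filter.Tendsto (fun t : ℝ => t ^ (b - (1 - a))) (nhds 0) (nhds 0) := by
      have := (Real.continuousAt_rpow_const 0 (b - (1 - a)) (Or.inr (by linarith))).tendsto
      rwa [Real.zero_rpow (by linarith : b - (1 - a) ≠ 0)] at this
    have h2 : Filter.Tendsto (fun t : ℝ => t ^ a) (nhds 0) (nhds 0) := by
      have := (Real.continuousAt_rpow_const 0 a (Or.inr ha0.le)).tendsto
      rwa [Real.zero_rpow (ne_of_gt ha0)] at this
    have h3 : Filter.Tendsto (fun t : ℝ => M * t ^ (b - (1 - a)) + |C| * t ^ a)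
        (nhds 0) (nhds (M * 0 + |C| * 0)) :=
      Filter.Tendsto.add (h1.const_mul M) (h2.const_mul |C|)
    have h4 : Filter.Tendsto (fun t : ℝ => M * t ^ (b - (1 - a)) + |C| * t ^ a)
        (nhdsWithin 0 (Set.Ioi 0)) (nhds (M * 0 + |C| * 0)) :=
      h3.mono_left nhdsWithin_le_nhds
    simpa using h4
  have hev2 : ∀ᶠ t in nhdsWithin 0 (Set.Ioi 0),
      M * t ^ (b - (1 - a)) + |C| * t ^ a < k / 2 :=
    htend.eventually (eventually_lt_nhds (by positivity))
  have hev3 : ∀ᶠ t in nhdsWithin 0 (Set.Ioi 0), t ∈ Set.Ioc 0 (d - l) :=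
    Filter.eventually_of_mem (Ioc_mem_nhdsGT_of_mem ⟨le_refl 0, by linarith⟩) (fun t ht => ht)
  obtain ⟨t, ht1, ht2⟩ := (hev2.and hev3).exists
  have ht0 : 0 < t := ht2.1
  have hpow1 : t ^ (b - (1 - a)) * t ^ (1 - a) = t ^ b := by
    rw [← Real.rpow_add ht0]; ring_nf
  have hpow2 : t ^ a * t ^ (1 - a) = t := by
    rw [← Real.rpow_add ht0]
    norm_num
  have hkey' := hkey t ht2
  have htp : (0:ℝ) < t ^ (1 - a) := Real.rpow_pos_of_pos ht0 _
  have : M * t ^ b + |C| * t = (M * t ^ (b - (1 - a)) + |C| * t ^ a) * t ^ (1 - a) := by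
    rw [add_mul, mul_assoc, mul_assoc, hpow1, hpow2]
  rw [this] at hkey'
  have := mul_lt_mul_of_pos_right ht1 htp
  linarith



/-- Invariance argument for the functionals `C^{a,±}_{α,n}` in the proof of
Theorem 5.8 of the paper (case `0 < a < 1`): if `ψ''(x)(x-l)^{1+a}` has a nonzero
limit as `x → l⁺`, then `ψ` is not `b`-Hölder on `(l, l+ε]` for any `b > 1-a`. -/
theorem stmt_5 (a l ε : ℝ) (ha0 : 0 < a) (ha1 : a < 1) (hε : 0 < ε)
    (ψ ψ' ψ'' : ℝ → ℝ)
    (hd1 : ∀ x ∈ Set.Ioc l (l + ε), HasDerivWithinAt ψ (ψ' x) (Set.Ioc l (l + ε)) x)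
    (hd2 : ∀ x ∈ Set.Ioc l (l + ε), HasDerivWithinAt ψ' (ψ'' x) (Set.Ioc l (l + ε)) x)
    (hcont : ContinuousOn ψ'' (Set.Ioc l (l + ε)))
    (L : ℝ) (hL : L ≠ 0)
    (hlim : Filter.Tendsto (fun x => ψ'' x * (x - l) ^ (1 + a))
      (nhdsWithin l (Set.Ioi l)) (nhds L)) :
    ∀ b : ℝ, 1 - a < b → b ≤ 1 →
      ¬ ∃ M : ℝ, 0 ≤ M ∧ ∀ x ∈ Set.Ioc l (l + ε), ∀ y ∈ Set.Ioc l (l + ε),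
        |ψ x - ψ y| ≤ M * |x - y| ^ b := by
  intro b hb1 hb2 ⟨M, hM, hhol⟩
  rcases hL.lt_or_gt with hneg | hpos
  · -- L < 0 : apply to -ψ
    apply aux_pos a l ε ha0 ha1 hε (fun x => -ψ x) (fun x => -ψ' x) (fun x => -ψ'' x)
      (fun x hx => (hd1 x hx).neg) (fun x hx => (hd2 x hx).neg) (-L) (by linarith)
      ?_ b hb1 hb2 M hM ?_
    · have := hlim.neg
      convert this using 2 with x
      ring
    · intro x hx y hy
      have := hhol x hx y hy
      rwa [show -ψ x - -ψ y = -(ψ x - ψ y) by ring, abs_neg]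
  · exact aux_pos a l ε ha0 ha1 hε ψ ψ' ψ'' hd1 hd2 L hpos hlim b hb1 hb2 M hM hhol
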